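/- Let A, B, C, D be 2×2 complex matrices. Assume Aᵗσ₃B = Bᵗσ₃A, Cᵗσ₃D = Dᵗσ₃C, and that M := Aᵗσ₃D − Bᵗσ₃C is invertible. Then the 4×4 block matrix [[A, C],[B, D]] is invertible, and its inverse equals the product of 4×4 block matrices [[(Mᵗ)⁻¹, 0],[0, M⁻¹]] · [[0, −I],[I, 0]] · [[Aᵗ, Bᵗ],[Cᵗ, Dᵗ]] · [[0, σ₃],[−σ₃, 0]], where I is the 2×2 identity matrix. -/

import Mathlib

open Matrix

/-- The Pauli matrix `σ₃ = diag(1, −1)`. -/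
noncomputable def sigma3 : Matrix (Fin 2) (Fin 2) ℂ := !![1, 0; 0, -1]

/-- **Block inversion formula** (Lemma 3.1 / `inver-2-matrix`): if the Wronskian-type
symmetry conditions hold and `M = Aᵀσ₃D − Bᵀσ₃C` is invertible, then the `4×4` block
matrix `[[A, C],[B, D]]` is invertible with the stated explicit inverse. -/
theorem block_matrix_inverse (A B C D : Matrix (Fin 2) (Fin 2) ℂ)
    (hAB : Aᵀ * sigma3 * B = Bᵀ * sigma3 * A)
    (hCD : Cᵀ * sigma3 * D = Dᵀ * sigma3 * C)
    (hM : IsUnit (Aᵀ * sigma3 * D - Bᵀ * sigma3 * C)) :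
    IsUnit (Matrix.fromBlocks A C B D) ∧
      (Matrix.fromBlocks A C B D)⁻¹ =
        Matrix.fromBlocks ((Aᵀ * sigma3 * D - Bᵀ * sigma3 * C)ᵀ)⁻¹ 0 0
            (Aᵀ * sigma3 * D - Bᵀ * sigma3 * C)⁻¹ *
          Matrix.fromBlocks 0 (-1) 1 0 *
          Matrix.fromBlocks Aᵀ Bᵀ Cᵀ Dᵀ *
          Matrix.fromBlocks 0 sigma3 (-sigma3) 0 := by
  set M := Aᵀ * sigma3 * D - Bᵀ * sigma3 * C with hMdef
  have hs : sigma3ᵀ = sigma3 := by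
    ext i j; fin_cases i <;> fin_cases j <;> simp [sigma3]
  have hMt : IsUnit Mᵀ := by
    rw [Matrix.isUnit_iff_isUnit_det, Matrix.det_transpose,
      ← Matrix.isUnit_iff_isUnit_det]
    exact hM
  have hMtval : Mᵀ = Dᵀ * sigma3 * A - Cᵀ * sigma3 * B := by
    simp [hMdef, Matrix.transpose_sub, Matrix.transpose_mul, hs, Matrix.mul_assoc]
  have hMinv : M⁻¹ * M = 1 :=
    Matrix.nonsing_inv_mul M (by rwa [Matrix.isUnit_iff_isUnit_det] at hM)
  have hMtinv : (Mᵀ)⁻¹ * Mᵀ = 1 :=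
    Matrix.nonsing_inv_mul Mᵀ (by rwa [Matrix.isUnit_iff_isUnit_det] at hMt)
  have h1 : Mᵀ⁻¹ * Dᵀ * sigma3 * A + -(Mᵀ⁻¹ * Cᵀ * sigma3 * B) = 1 := by
    have e : Mᵀ⁻¹ * Dᵀ * sigma3 * A + -(Mᵀ⁻¹ * Cᵀ * sigma3 * B)
        = (Mᵀ)⁻¹ * (Dᵀ * sigma3 * A - Cᵀ * sigma3 * B) := by noncomm_ring
    rw [e, ← hMtval, hMtinv]
  have h2 : Mᵀ⁻¹ * Dᵀ * sigma3 * C + -(Mᵀ⁻¹ * Cᵀ * sigma3 * D) = 0 := by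
    have e : Mᵀ⁻¹ * Dᵀ * sigma3 * C + -(Mᵀ⁻¹ * Cᵀ * sigma3 * D)
        = (Mᵀ)⁻¹ * (Dᵀ * sigma3 * C - Cᵀ * sigma3 * D) := by noncomm_ring
    rw [e, hCD, sub_self, Matrix.mul_zero]
  have h3 : -(M⁻¹ * Bᵀ * sigma3 * A) + M⁻¹ * Aᵀ * sigma3 * B = 0 := by
    have e : -(M⁻¹ * Bᵀ * sigma3 * A) + M⁻¹ * Aᵀ * sigma3 * B
        = M⁻¹ * (Aᵀ * sigma3 * B - Bᵀ * sigma3 * A) := by noncomm_ring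
    rw [e, hAB, sub_self, Matrix.mul_zero]
  have h4 : -(M⁻¹ * Bᵀ * sigma3 * C) + M⁻¹ * Aᵀ * sigma3 * D = 1 := by
    have e : -(M⁻¹ * Bᵀ * sigma3 * C) + M⁻¹ * Aᵀ * sigma3 * D
        = M⁻¹ * (Aᵀ * sigma3 * D - Bᵀ * sigma3 * C) := by noncomm_ring
    rw [e, ← hMdef, hMinv]
  have key : (Matrix.fromBlocks (Mᵀ)⁻¹ 0 0 M⁻¹ *
          Matrix.fromBlocks 0 (-1) 1 0 *
          Matrix.fromBlocks Aᵀ Bᵀ Cᵀ Dᵀ *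
          Matrix.fromBlocks 0 sigma3 (-sigma3) 0) * Matrix.fromBlocks A C B D = 1 := by
    simp only [Matrix.fromBlocks_multiply, Matrix.mul_zero, Matrix.zero_mul,
      Matrix.mul_one, Matrix.mul_neg, Matrix.neg_mul, add_zero, zero_add,
      mul_zero, zero_mul, mul_neg, neg_mul, mul_one, neg_zero, neg_neg]
    rw [h1, h2, h3, h4, Matrix.fromBlocks_one]
  refine ⟨(Matrix.isUnit_iff_isUnit_det _).mpr (Matrix.isUnit_det_of_left_inverse key), Matrix.inv_eq_left_inv key⟩
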